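/- Let α ∈ [0,1] be a real number, let n = 2^m for a positive integer m, and let Q_n = ⟨a, b | a^{2n} = e, b² = a^n, ab = ba^{−1}⟩ be the generalized quaternion (dicyclic) group of order 4n. Then for the power graph P(Q_n): (i) 4αn − 1 is an eigenvalue of A_α(P(Q_n)); (ii) 2αn − 1 is an eigenvalue whose eigenspace has dimension at least 2n − 3; (iii) 4α − 1 is an eigenvalue whose eigenspace has dimension at least n; (iv) 1 + 2α is an eigenvalue whose eigenspace has dimension at least n − 2. -/

import Mathlib

open Matrix Polynomial BigOperators

/-- The generalized adjacency matrix `A_α(G) = α·D(G) + (1−α)·A(G)`. -/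
noncomputable def Aalpha {V : Type*} [Fintype V] (G : SimpleGraph V) (α : ℝ) :
    Matrix V V ℝ :=
  letI := Classical.decEq V
  letI := Classical.decRel G.Adj
  α • Matrix.diagonal (fun v => (G.degree v : ℝ)) + (1 - α) • G.adjMatrix ℝ

/-- `μ` is an eigenvalue of the real matrix `M`. -/
def Matrix.IsEigenvalue {n : Type*} [Fintype n] (M : Matrix n n ℝ) (μ : ℝ) : Prop :=
  ∃ v : n → ℝ, v ≠ 0 ∧ M.mulVec v = μ • v

/-- The dimension of the eigenspace of a real matrix `M` for the value `μ`. -/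
noncomputable def eigMult {n : Type*} [Fintype n] (M : Matrix n n ℝ) (μ : ℝ) : ℕ :=
  letI := Classical.decEq n
  Module.finrank ℝ (Module.End.eigenspace (Matrix.toLin' M) μ)

/-- The joined union `G[G_1, …, G_n]`. -/
def joinedUnion {n : ℕ} (G : SimpleGraph (Fin n)) (V : Fin n → Type*)
    (Gs : ∀ i, SimpleGraph (V i)) : SimpleGraph (Σ i, V i) :=
  SimpleGraph.fromRel (fun x y =>
    if h : x.1 = y.1 then (Gs y.1).Adj (h ▸ x.2) y.2 else G.Adj x.1 y.1)

/-- The join `G ∇ H` of two graphs. -/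
def graphJoin {V W : Type*} (G : SimpleGraph V) (H : SimpleGraph W) :
    SimpleGraph (V ⊕ W) :=
  SimpleGraph.fromRel (fun x y =>
    match x, y with
    | Sum.inl a, Sum.inl b => G.Adj a b
    | Sum.inr a, Sum.inr b => H.Adj a b
    | _, _ => True)

/-- The disjoint union `G ∪ H` of two graphs. -/
def disjUnion {V W : Type*} (G : SimpleGraph V) (H : SimpleGraph W) :
    SimpleGraph (V ⊕ W) :=
  SimpleGraph.fromRel (fun x y =>
    match x, y with
    | Sum.inl a, Sum.inl b => G.Adj a b
    | Sum.inr a, Sum.inr b => H.Adj a b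
    | _, _ => False)

/-- Degree of a vertex (classical version). -/
noncomputable def gdegree {V : Type*} [Fintype V] (G : SimpleGraph V) (v : V) : ℕ :=
  letI := Classical.decEq V
  letI := Classical.decRel G.Adj
  G.degree v

/-- The power graph of a group. -/
def powerGraph (G : Type*) [Group G] : SimpleGraph G :=
  SimpleGraph.fromRel (fun x y => ∃ k : ℕ, 0 < k ∧ y = x ^ k)



open QuaternionGroup

/-- Solvability of `c * i = j` in `ZMod M` when `gcd M i.val ∣ j.val`. -/
lemma zmod_mul_solvable {M : ℕ} [NeZero M] (i j : ZMod M)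
    (h : Nat.gcd M i.val ∣ j.val) : ∃ c : ZMod M, c * i = j := by
  set d : ℕ := Nat.gcd M i.val with hd
  obtain ⟨t, ht⟩ := h
  have hbez : (d : ℤ) = M * Int.gcdA M i.val + i.val * Int.gcdB M i.val := by
    rw [hd, ← Int.gcd_natCast_natCast, Int.gcd_eq_gcd_ab]
  -- cast to ZMod M
  have hcast : (d : ZMod M) = i * (Int.gcdB (M : ℤ) (i.val : ℤ) : ZMod M) := by
    have := congrArg (fun z : ℤ => (z : ZMod M)) hbez
    push_cast at this
    rw [ZMod.natCast_self, ZMod.natCast_zmod_val] at this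
    simpa using this
  refine ⟨(t : ZMod M) * (Int.gcdB (M : ℤ) (i.val : ℤ) : ZMod M), ?_⟩
  have : (j.val : ZMod M) = j := ZMod.natCast_zmod_val j
  rw [← this, ht]
  push_cast
  rw [hcast]
  ring

lemma zmod_comparable {M : ℕ} [NeZero M] (hM : ∃ r : ℕ, M = 2 ^ r) (i j : ZMod M) :
    (∃ c : ZMod M, c * i = j) ∨ (∃ c : ZMod M, c * j = i) := by
  obtain ⟨r, rfl⟩ := hM
  have h1 : Nat.gcd (2 ^ r) i.val ∣ 2 ^ r := Nat.gcd_dvd_left _ _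
  have h2 : Nat.gcd (2 ^ r) j.val ∣ 2 ^ r := Nat.gcd_dvd_left _ _
  obtain ⟨s, hs, hse⟩ := (Nat.dvd_prime_pow Nat.prime_two).mp h1
  obtain ⟨t, ht, hte⟩ := (Nat.dvd_prime_pow Nat.prime_two).mp h2
  rcases le_total s t with hst | hst
  · left
    refine zmod_mul_solvable i j (dvd_trans ?_ (Nat.gcd_dvd_right (2^r) j.val))
    rw [hse, hte]; exact pow_dvd_pow 2 hst
  · right
    refine zmod_mul_solvable j i (dvd_trans ?_ (Nat.gcd_dvd_right (2^r) i.val))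
    rw [hse, hte]; exact pow_dvd_pow 2 hst

variable {n : ℕ}

lemma qa_pow (i : ZMod (2*n)) (k : ℕ) : (a i : QuaternionGroup n) ^ k = a ((k : ZMod (2*n)) * i) := by
  induction k with
  | zero => simp [one_def, -a_zero]
  | succ k ih =>
    rw [pow_succ, ih, a_mul_a]
    congr 1
    push_cast
    ring

lemma nn_zero : ((n : ZMod (2*n)) + n) = 0 := by
  have : ((2 * n : ℕ) : ZMod (2*n)) = 0 := ZMod.natCast_self _
  push_cast at this
  linear_combination this

lemma qn_ne_zero (hn : 0 < n) : ((n : ZMod (2*n)) : ZMod (2*n)) ≠ 0 := by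
  intro h
  have : (n : ZMod (2*n)).val = n := ZMod.val_cast_of_lt (by omega)
  rw [h, ZMod.val_zero] at this
  omega

lemma qxa_pow_three (i : ZMod (2*n)) : (xa i : QuaternionGroup n) ^ 3 = xa ((n : ZMod (2*n)) + i) := by
  have h3 : (3 : ℕ) = 2 + 1 := rfl
  rw [h3, pow_succ, xa_sq, a_mul_xa]
  congr 1
  have := (nn_zero (n := n))
  linear_combination -this

lemma qxa_pow_cases (i : ZMod (2*n)) (k : ℕ) :
    (xa i : QuaternionGroup n) ^ k = a 0 ∨ (xa i) ^ k = xa i ∨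
    (xa i) ^ k = a n ∨ (xa i) ^ k = xa ((n : ZMod (2*n)) + i) := by
  have hk : (xa i : QuaternionGroup n) ^ k = (xa i) ^ (k % 4) := by
    conv_lhs => rw [← Nat.div_add_mod k 4]
    rw [pow_add, pow_mul, xa_pow_four, one_pow, one_mul]
  have h4 : k % 4 < 4 := Nat.mod_lt _ (by norm_num)
  rw [hk]
  interval_cases h : (k % 4)
  · left; rw [pow_zero, one_def]
  · right; left; rw [pow_one]
  · right; right; left; rw [xa_sq]
  · right; right; right; exact qxa_pow_three i


section PG
variable {n : ℕ}

lemma pg_adj_aa (hn : 0 < n) (hpow : ∃ r : ℕ, 2*n = 2^r) {i j : ZMod (2*n)} (h : i ≠ j) :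
    (powerGraph (QuaternionGroup n)).Adj (a i) (a j) := by
  haveI : NeZero (2*n) := ⟨by omega⟩
  have hz : ((2*n : ℕ) : ZMod (2*n)) = 0 := ZMod.natCast_self _
  rw [powerGraph, SimpleGraph.fromRel_adj]
  refine ⟨by simpa using h, ?_⟩
  rcases zmod_comparable hpow i j with ⟨c, hc⟩ | ⟨c, hc⟩
  · left
    refine ⟨c.val + 2*n, by omega, ?_⟩
    rw [qa_pow, Nat.cast_add, hz, ZMod.natCast_zmod_val, add_zero, hc]
  · right
    refine ⟨c.val + 2*n, by omega, ?_⟩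
    rw [qa_pow, Nat.cast_add, hz, ZMod.natCast_zmod_val, add_zero, hc]

lemma pg_adj_aa_iff (hn : 0 < n) (hpow : ∃ r : ℕ, 2*n = 2^r) {i j : ZMod (2*n)} :
    (powerGraph (QuaternionGroup n)).Adj (a i) (a j) ↔ i ≠ j := by
  constructor
  · intro h hij
    exact (powerGraph (QuaternionGroup n)).irrefl (by rw [hij] at h; exact h)
  · exact pg_adj_aa hn hpow

lemma pg_adj_ax {i j : ZMod (2*n)} :
    (powerGraph (QuaternionGroup n)).Adj (a i) (xa j) ↔ i = 0 ∨ i = (n : ZMod (2*n)) := by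
  rw [powerGraph, SimpleGraph.fromRel_adj]
  constructor
  · rintro ⟨hne, ⟨k, hk, he⟩ | ⟨k, hk, he⟩⟩
    · rw [qa_pow] at he; exact absurd he (by simp)
    · rcases qxa_pow_cases j k with h | h | h | h <;> rw [h] at he
      · left; injection he
      · exact absurd he (by simp)
      · right; injection he
      · exact absurd he (by simp)
  · rintro (rfl | rfl)
    · exact ⟨by simp [-a_zero], Or.inr ⟨4, by norm_num, by rw [xa_pow_four, one_def]⟩⟩
    · exact ⟨by simp, Or.inr ⟨2, by norm_num, (xa_sq j).symm⟩⟩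

lemma pg_adj_xa {i j : ZMod (2*n)} :
    (powerGraph (QuaternionGroup n)).Adj (xa i) (a j) ↔ j = 0 ∨ j = (n : ZMod (2*n)) := by
  rw [SimpleGraph.adj_comm]; exact pg_adj_ax

lemma pg_adj_xx (hn : 0 < n) {i j : ZMod (2*n)} :
    (powerGraph (QuaternionGroup n)).Adj (xa i) (xa j) ↔ j = (n : ZMod (2*n)) + i := by
  rw [powerGraph, SimpleGraph.fromRel_adj]
  constructor
  · rintro ⟨hne, ⟨k, hk, he⟩ | ⟨k, hk, he⟩⟩
    · rcases qxa_pow_cases i k with h | h | h | h <;> rw [h] at he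
      · exact absurd he (by simp [-a_zero])
      · exact absurd he.symm hne
      · exact absurd he (by simp)
      · injection he
    · rcases qxa_pow_cases j k with h | h | h | h <;> rw [h] at he
      · exact absurd he (by simp [-a_zero])
      · exact absurd he hne
      · exact absurd he (by simp)
      · injection he with h'
        rw [h', ← add_assoc, nn_zero, zero_add]
  · rintro rfl
    refine ⟨?_, Or.inl ⟨3, by norm_num, (qxa_pow_three i).symm⟩⟩
    intro hcon
    injection hcon with h'
    exact qn_ne_zero hn (by linear_combination -h')

end PG


lemma Aalpha_apply {V : Type*} [Fintype V] [DecidableEq V] (G : SimpleGraph V)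
    [DecidableRel G.Adj] (α : ℝ) (x y : V) :
    Aalpha G α x y =
      (if x = y then α * (G.degree x : ℝ) else 0) + (if G.Adj x y then 1 - α else 0) := by
  unfold Aalpha
  rw [Subsingleton.elim (Classical.decEq V) ‹DecidableEq V›,
      Subsingleton.elim (Classical.decRel G.Adj) ‹DecidableRel G.Adj›]
  simp only [Matrix.add_apply, Matrix.smul_apply, Matrix.diagonal_apply,
    SimpleGraph.adjMatrix_apply, smul_eq_mul, mul_ite, mul_one, mul_zero]

section DEG
variable {n : ℕ}

lemma deg_xa (hn : 0 < n) (i : ZMod (2*n))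
    [Fintype ((powerGraph (QuaternionGroup n)).neighborSet (xa i))] :
    (powerGraph (QuaternionGroup n)).degree (xa i) = 3 := by
  haveI : NeZero (2*n) := ⟨by omega⟩
  have hset : (powerGraph (QuaternionGroup n)).neighborFinset (xa i) =
      {a 0, a (n : ZMod (2*n)), xa ((n : ZMod (2*n)) + i)} := by
    ext w
    rw [SimpleGraph.mem_neighborFinset]
    rcases w with j | j
    · rw [pg_adj_xa]
      simp [Finset.mem_insert, -a_zero]
    · rw [pg_adj_xx hn]
      simp [Finset.mem_insert, -a_zero]
  rw [SimpleGraph.degree, hset]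
  rw [Finset.card_insert_of_notMem (by simp [(qn_ne_zero hn).symm, Ne.symm, -a_zero]),
      Finset.card_insert_of_notMem (by simp [-a_zero]), Finset.card_singleton]

lemma deg_a_mid (hn : 0 < n) (hpow : ∃ r : ℕ, 2*n = 2^r) (i : ZMod (2*n))
    (hi0 : i ≠ 0) (hin : i ≠ (n : ZMod (2*n)))
    [Fintype ((powerGraph (QuaternionGroup n)).neighborSet (a i))] :
    (powerGraph (QuaternionGroup n)).degree (a i) = 2*n - 1 := by
  haveI : NeZero (2*n) := ⟨by omega⟩
  have hset : (powerGraph (QuaternionGroup n)).neighborFinset (a i) =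
      (Finset.univ.erase i).image QuaternionGroup.a := by
    ext w
    rw [SimpleGraph.mem_neighborFinset]
    rcases w with j | j
    · rw [pg_adj_aa_iff hn hpow]
      simp only [Finset.mem_image, Finset.mem_erase, Finset.mem_univ, and_true]
      constructor
      · intro h; exact ⟨j, Ne.symm h, rfl⟩
      · rintro ⟨x, hx, hxe⟩
        injection hxe with h'
        subst h'
        exact Ne.symm hx
    · rw [pg_adj_ax]
      simp [hi0, hin]
  rw [SimpleGraph.degree, hset,
    Finset.card_image_of_injective _ (fun x y h => by injection h),
    Finset.card_erase_of_mem (Finset.mem_univ i), Finset.card_univ, ZMod.card]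

lemma deg_a_dom (hn : 0 < n) (hpow : ∃ r : ℕ, 2*n = 2^r) (i : ZMod (2*n))
    (hi : i = 0 ∨ i = (n : ZMod (2*n))) [NeZero n]
    [Fintype ((powerGraph (QuaternionGroup n)).neighborSet (a i))] :
    (powerGraph (QuaternionGroup n)).degree (a i) = 4*n - 1 := by
  haveI : NeZero (2*n) := ⟨by omega⟩
  have hset : (powerGraph (QuaternionGroup n)).neighborFinset (a i) =
      Finset.univ.erase (a i) := by
    ext w
    rw [SimpleGraph.mem_neighborFinset, Finset.mem_erase]
    rcases w with j | j
    · rw [pg_adj_aa_iff hn hpow]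
      simp only [Finset.mem_univ, and_true, ne_eq]
      constructor
      · intro h he; injection he with h'; exact h h'.symm
      · intro h h'; exact h (by rw [h'])
    · rw [pg_adj_ax]
      constructor
      · intro _; exact ⟨by simp, Finset.mem_univ _⟩
      · intro _; exact hi
  rw [SimpleGraph.degree, hset, Finset.card_erase_of_mem (Finset.mem_univ _),
    Finset.card_univ, QuaternionGroup.card]

end DEG

lemma zmod_cast_inj {M : ℕ} [NeZero M] {x y : ℕ} (hx : x < M) (hy : y < M) :
    ((x : ZMod M) = (y : ZMod M)) ↔ x = y := by
  constructor
  · intro h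
    have := congrArg ZMod.val h
    rwa [ZMod.val_cast_of_lt hx, ZMod.val_cast_of_lt hy] at this
  · intro h; rw [h]

/-- Twin eigenvector lemma. -/
lemma twin_eigen {V : Type*} [Fintype V] [DecidableEq V] (G : SimpleGraph V)
    [DecidableRel G.Adj] (α : ℝ) (p q : V) (hne : p ≠ q) (hadj : G.Adj p q)
    (hnb : ∀ x, x ≠ p → x ≠ q → (G.Adj x p ↔ G.Adj x q)) (d : ℝ)
    (hdp : ((G.degree p : ℕ) : ℝ) = d) (hdq : ((G.degree q : ℕ) : ℝ) = d) :
    (Aalpha G α).mulVec (Pi.single p 1 + Pi.single q (-1)) =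
      (α * d - (1 - α)) • (Pi.single p 1 + Pi.single q (-1)) := by
  rw [Matrix.mulVec_add, Matrix.mulVec_single, Matrix.mulVec_single]
  funext x
  simp only [Pi.add_apply, Pi.smul_apply, smul_eq_mul, Pi.single_apply, op_smul_eq_mul, Matrix.col_apply]
  rw [Aalpha_apply, Aalpha_apply]
  by_cases hxp : x = p
  · subst hxp
    simp only [if_pos rfl, if_neg hne, if_neg (G.irrefl), if_pos hadj, eq_self_iff_true, if_true]
    rw [hdp]; ring
  · by_cases hxq : x = q
    · subst hxq
      simp only [if_pos rfl, if_neg hxp, if_pos (G.adj_symm hadj), if_neg (G.irrefl), eq_self_iff_true, if_true]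
      rw [hdq]; ring
    · simp only [if_neg hxp, if_neg hxq]
      by_cases hadjp : G.Adj x p
      · simp only [if_pos hadjp, if_pos ((hnb x hxp hxq).mp hadjp)]; ring
      · simp only [if_neg hadjp, if_neg (fun h => hadjp ((hnb x hxp hxq).mpr h))]; ring

lemma li_probe {V ι : Type*} [Fintype ι] [DecidableEq ι] (w : ι → V → ℝ) (t : ι → V)
    (h : ∀ i j, w j (t i) = if j = i then 1 else 0) : LinearIndependent ℝ w := by
  classical
  rw [Fintype.linearIndependent_iff]
  intro g hg i
  have h2 := congrFun hg (t i)
  simp only [Finset.sum_apply, Pi.smul_apply, smul_eq_mul, Pi.zero_apply] at h2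
  rw [Finset.sum_congr rfl (fun j _ => by rw [h i j])] at h2
  simpa [mul_ite, Finset.sum_ite_eq'] using h2

lemma eig_lb {V : Type*} [Fintype V] (M : Matrix V V ℝ) (μ : ℝ) {k : ℕ}
    (w : Fin k → (V → ℝ)) (hw : ∀ i, M.mulVec (w i) = μ • w i)
    (hli : LinearIndependent ℝ w) : k ≤ eigMult M μ := by
  unfold eigMult
  letI := Classical.decEq V
  have hmem : ∀ i, w i ∈ Module.End.eigenspace (Matrix.toLin' M) μ := fun i =>
    Module.End.mem_eigenspace_iff.mpr (by rw [Matrix.toLin'_apply]; exact hw i)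
  set E := Module.End.eigenspace (Matrix.toLin' M) μ with hE
  let w' : Fin k → E := fun i => ⟨w i, hmem i⟩
  have hli' : LinearIndependent ℝ w' := by
    apply LinearIndependent.of_comp E.subtype
    have : (E.subtype ∘ w') = w := funext fun i => rfl
    rw [this]; exact hli
  simpa using hli'.fintype_card_le_finrank

lemma quad_eigen {n : ℕ} [NeZero n] (α : ℝ) (i j : ZMod (2*n))
    (hij : i ≠ j) (hij2 : i ≠ (n : ZMod (2*n)) + j) :
    (Aalpha (powerGraph (QuaternionGroup n)) α).mulVec
      (Pi.single (xa i) 1 + Pi.single (xa ((n : ZMod (2*n)) + i)) 1 +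
       Pi.single (xa j) (-1) + Pi.single (xa ((n : ZMod (2*n)) + j)) (-1)) =
    (1 + 2*α) • (Pi.single (xa i) 1 + Pi.single (xa ((n : ZMod (2*n)) + i)) 1 +
       Pi.single (xa j) (-1) + Pi.single (xa ((n : ZMod (2*n)) + j)) (-1)) := by
  have hn : 0 < n := NeZero.pos n
  letI : DecidableRel (powerGraph (QuaternionGroup n)).Adj := Classical.decRel _
  set N : ZMod (2*n) := (n : ZMod (2*n)) with hNdef
  have hN0 : N ≠ 0 := qn_ne_zero hn
  have hNN : N + N = 0 := nn_zero
  have hred : ∀ z : ZMod (2*n), N + (N + z) = z := fun z => by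
    rw [← add_assoc, hNN, zero_add]
  have f1 : i ≠ N + i := fun h => hN0 (by linear_combination -h)
  have f2 : N + i ≠ i := f1.symm
  have f4 : j ≠ i := hij.symm
  have f5 : i ≠ N + j := hij2
  have f6 : N + j ≠ i := f5.symm
  have f7 : j ≠ N + i := fun h => hij2 (by rw [h, hred])
  have f8 : N + i ≠ j := f7.symm
  have f9 : N + i ≠ N + j := fun h => hij (by linear_combination h)
  have f10 : N + j ≠ N + i := f9.symm
  have f11 : j ≠ N + j := fun h => hN0 (by linear_combination -h)
  have f12 : N + j ≠ j := f11.symm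
  rw [Matrix.mulVec_add, Matrix.mulVec_add, Matrix.mulVec_add,
      Matrix.mulVec_single, Matrix.mulVec_single, Matrix.mulVec_single, Matrix.mulVec_single]
  funext x
  simp only [Pi.add_apply, Pi.smul_apply, smul_eq_mul, Pi.single_apply, op_smul_eq_mul, Matrix.col_apply]
  rcases x with k | k
  · rw [Aalpha_apply, Aalpha_apply, Aalpha_apply, Aalpha_apply]
    simp only [pg_adj_ax, reduceCtorEq, if_false]
    ring
  · rw [Aalpha_apply, Aalpha_apply, Aalpha_apply, Aalpha_apply]
    simp only [QuaternionGroup.xa.injEq, pg_adj_xx hn, deg_xa hn, ← hNdef]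
    by_cases hk1 : k = i
    · subst hk1
      simp only [hred, f1, f2, f4, f5, f6, f7, f8, f9, f10, f11, f12, hij, hij2,
        eq_self_iff_true, if_true, if_false]
      push_cast; ring
    · by_cases hk2 : k = N + i
      · subst hk2
        simp only [hred, f1, f2, f4, f5, f6, f7, f8, f9, f10, f11, f12, hij, hij2,
          eq_self_iff_true, if_true, if_false]
        push_cast; ring
      · by_cases hk3 : k = j
        · subst hk3
          simp only [hred, f1, f2, f4, f5, f6, f7, f8, f9, f10, f11, f12, hij, hij2,
            eq_self_iff_true, if_true, if_false]
          push_cast; ring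
        · by_cases hk4 : k = N + j
          · subst hk4
            simp only [hred, f1, f2, f4, f5, f6, f7, f8, f9, f10, f11, f12, hij, hij2,
              eq_self_iff_true, if_true, if_false]
            push_cast; ring
          · have g1 : i ≠ N + k := fun h => hk2 (by rw [h, hred])
            have g2 : N + i ≠ N + k := fun h => hk1 (by linear_combination -h)
            have g3 : j ≠ N + k := fun h => hk4 (by rw [h, hred])
            have g4 : N + j ≠ N + k := fun h => hk3 (by linear_combination -h)
            simp only [hk1, hk2, hk3, hk4, g1, g2, g3, g4, if_false]
            ring
/-- eigenvalues of the power graph of the generalized quaternion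
(dicyclic) group `Q_n` of order `4n`, where `n = 2^m`. -/
theorem stmt_19 {α : ℝ} (hα : α ∈ Set.Icc (0 : ℝ) 1)
    (m n : ℕ) (hm : 1 ≤ m) (hn : n = 2 ^ m) [NeZero n] :
    Matrix.IsEigenvalue (Aalpha (powerGraph (QuaternionGroup n)) α)
      (4 * α * (n : ℝ) - 1) ∧
    2 * n - 3 ≤ eigMult (Aalpha (powerGraph (QuaternionGroup n)) α)
      (2 * α * (n : ℝ) - 1) ∧
    n ≤ eigMult (Aalpha (powerGraph (QuaternionGroup n)) α) (4 * α - 1) ∧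
    n - 2 ≤ eigMult (Aalpha (powerGraph (QuaternionGroup n)) α) (1 + 2 * α) := by
  have hn1 : 0 < n := NeZero.pos n
  have hn2 : 2 ≤ n := by
    rw [hn]
    calc 2 = 2^1 := (pow_one 2).symm
    _ ≤ 2^m := Nat.pow_le_pow_right (by norm_num) hm
  have hpow : ∃ r : ℕ, 2*n = 2^r := ⟨m+1, by rw [hn, pow_succ]; ring⟩
  haveI : NeZero (2*n) := ⟨by omega⟩
  haveI : Fact (1 < 2*n) := ⟨by omega⟩
  letI : DecidableRel (powerGraph (QuaternionGroup n)).Adj := Classical.decRel _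
  set N : ZMod (2*n) := (n : ZMod (2*n)) with hNdef
  have hN0 : N ≠ 0 := qn_ne_zero hn1
  have hNN : N + N = 0 := nn_zero
  have hNval : N.val = n := ZMod.val_cast_of_lt (by omega)
  have hred : ∀ z : ZMod (2*n), N + (N + z) = z := fun z => by
    rw [← add_assoc, hNN, zero_add]
  have h10 : (1 : ZMod (2*n)) ≠ 0 := one_ne_zero
  have h1N : (1 : ZMod (2*n)) ≠ N := by
    intro h
    have := congrArg ZMod.val h
    rw [ZMod.val_one, hNval] at this
    omega
  have hdom : ∀ i : ZMod (2*n), (i = 0 ∨ i = N) →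
      (((powerGraph (QuaternionGroup n)).degree (a i) : ℕ) : ℝ) = 4*(n:ℝ) - 1 := by
    intro i hi
    rw [deg_a_dom hn1 hpow i hi, Nat.cast_sub (by omega)]
    push_cast; ring
  have hmid : ∀ i : ZMod (2*n), i ≠ 0 → i ≠ N →
      (((powerGraph (QuaternionGroup n)).degree (a i) : ℕ) : ℝ) = 2*(n:ℝ) - 1 := by
    intro i hi0 hiN
    rw [deg_a_mid hn1 hpow i hi0 hiN, Nat.cast_sub (by omega)]
    push_cast; ring
  have hdx : ∀ i : ZMod (2*n), (((powerGraph (QuaternionGroup n)).degree (xa i) : ℕ) : ℝ) = 3 := by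
    intro i
    rw [deg_xa hn1 i]; norm_num
  refine ⟨?_, ?_, ?_, ?_⟩
  · -- part (i)
    refine ⟨Pi.single (a 0) 1 + Pi.single (a N) (-1), ?_, ?_⟩
    · intro h
      have h0 := congrFun h (a (0 : ZMod (2*n)))
      rw [Pi.add_apply, Pi.single_eq_same,
        Pi.single_eq_of_ne (fun hc : a (0:ZMod (2*n)) = a N => hN0 (by injection hc with h'; exact h'.symm)),
        Pi.zero_apply] at h0
      norm_num at h0
    · have heig := twin_eigen (powerGraph (QuaternionGroup n)) α (a 0) (a N)
        (fun hc => hN0 (by injection hc with h'; exact h'.symm))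
        (pg_adj_aa hn1 hpow (Ne.symm hN0))
        (by
          intro x hx0 hxN
          rcases x with j | j
          · have hj0 : j ≠ 0 := fun h => hx0 (by rw [h])
            have hjN : j ≠ N := fun h => hxN (by rw [h])
            rw [pg_adj_aa_iff hn1 hpow, pg_adj_aa_iff hn1 hpow]
            simp [hj0, hjN]
          · rw [pg_adj_xa, pg_adj_xa]
            simp [hNdef])
        (4*(n:ℝ) - 1) (hdom 0 (Or.inl rfl)) (hdom N (Or.inr rfl))
      rw [heig]
      congr 1
      ring
  · -- part (ii) : 2n-3
    set e : Fin (2*n-3) → ℕ := fun i => if i.val + 2 < n then i.val + 2 else i.val + 3 with he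
    have hel : ∀ i, 2 ≤ e i ∧ e i < 2*n ∧ e i ≠ n := by
      intro i
      have := i.isLt
      rw [he]
      dsimp only
      split <;> omega
    have heinj : ∀ i j, e i = e j → i = j := by
      intro i j h
      have hi := i.isLt
      have hj := j.isLt
      rw [he] at h
      dsimp only at h
      apply Fin.ext
      split_ifs at h <;> omega
    set z : Fin (2*n-3) → ZMod (2*n) := fun i => ((e i : ℕ) : ZMod (2*n)) with hz
    have hvz : ∀ i, (z i).val = e i := fun i => ZMod.val_cast_of_lt (hel i).2.1
    have hz0 : ∀ i, z i ≠ 0 := by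
      intro i h
      have h2 := congrArg ZMod.val h
      rw [hvz, ZMod.val_zero] at h2
      have := (hel i).1
      omega
    have hz1 : ∀ i, z i ≠ 1 := by
      intro i h
      have h2 := congrArg ZMod.val h
      rw [hvz, ZMod.val_one] at h2
      have := (hel i).1
      omega
    have hzN : ∀ i, z i ≠ N := by
      intro i h
      have h2 := congrArg ZMod.val h
      rw [hvz, hNval] at h2
      exact (hel i).2.2 h2
    have hzinj : ∀ i j, z i = z j → i = j := by
      intro i j h
      have h2 := congrArg ZMod.val h
      rw [hvz, hvz] at h2
      exact heinj _ _ h2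
    apply eig_lb _ _ (fun i => Pi.single (a (z i)) 1 + Pi.single (a (1 : ZMod (2*n))) (-1))
    · intro i
      have heig := twin_eigen (powerGraph (QuaternionGroup n)) α (a (z i)) (a (1 : ZMod (2*n)))
        (fun hc => hz1 i (by injection hc))
        (pg_adj_aa hn1 hpow (hz1 i))
        (by
          intro x hx0 hxN
          rcases x with j | j
          · have hj0 : j ≠ z i := fun h => hx0 (by rw [h])
            have hjN : j ≠ 1 := fun h => hxN (by rw [h])
            rw [pg_adj_aa_iff hn1 hpow, pg_adj_aa_iff hn1 hpow]
            simp [hj0, hjN]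
          · rw [pg_adj_xa, pg_adj_xa]
            simp [hz0 i, hzN i, h10, h1N, ← hNdef])
        (2*(n:ℝ) - 1) (hmid _ (hz0 i) (hzN i)) (hmid _ h10 h1N)
      rw [heig]
      congr 1
      ring
    · apply li_probe _ (fun i => a (z i))
      intro i j
      rw [Pi.add_apply,
        Pi.single_eq_of_ne (fun hc : a (z i) = a (1:ZMod (2*n)) => hz1 i (by injection hc))]
      by_cases hji : j = i
      · subst hji
        rw [if_pos rfl, Pi.single_eq_same]
        norm_num
      · rw [if_neg hji,
          Pi.single_eq_of_ne (fun hc : a (z i) = a (z j) => hji (hzinj j i (by injection hc with h'; exact h'.symm)))]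
        norm_num
  · -- part (iii) : n
    set z1 : Fin n → ZMod (2*n) := fun i => ((i.val : ℕ) : ZMod (2*n)) with hz1d
    have hv1 : ∀ i, (z1 i).val = i.val := fun i => ZMod.val_cast_of_lt (by have := i.isLt; omega)
    have hv2 : ∀ i, (N + z1 i).val = n + i.val := by
      intro i
      have h3 : N + z1 i = ((n + i.val : ℕ) : ZMod (2*n)) := by push_cast; rfl
      rw [h3]
      exact ZMod.val_cast_of_lt (by have := i.isLt; omega)
    have hne12 : ∀ i, z1 i ≠ N + z1 i := fun i h => hN0 (by linear_combination -h)
    have hz1inj : ∀ i j, z1 i = z1 j → i = j := by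
      intro i j h
      have h2 := congrArg ZMod.val h
      rw [hv1, hv1] at h2
      exact Fin.ext h2
    apply eig_lb _ _ (fun i => Pi.single (xa (z1 i)) 1 + Pi.single (xa (N + z1 i)) (-1))
    · intro i
      have heig := twin_eigen (powerGraph (QuaternionGroup n)) α (xa (z1 i)) (xa (N + z1 i))
        (fun hc => hne12 i (by injection hc))
        (by rw [pg_adj_xx hn1])
        (by
          intro x hx0 hxN
          rcases x with j | j
          · rw [pg_adj_ax, pg_adj_ax]
          · have hj1 : j ≠ z1 i := fun h => hx0 (by rw [h])
            have hj2 : j ≠ N + z1 i := fun h => hxN (by rw [h])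
            rw [pg_adj_xx hn1, pg_adj_xx hn1]
            constructor
            · intro h; exact absurd (by rw [h, hred] : N + z1 i = j).symm hj2
            · intro h; exact absurd (by linear_combination -h : j = z1 i) hj1)
        3 (hdx _) (hdx _)
      rw [heig]
      congr 1
      ring
    · apply li_probe _ (fun i => xa (z1 i))
      intro i j
      rw [Pi.add_apply,
        Pi.single_eq_of_ne (fun hc : xa (z1 i) = xa (N + z1 j) => by
          injection hc with h'
          have h2 := congrArg ZMod.val h'
          rw [hv1, hv2] at h2
          have := i.isLt
          omega)]
      by_cases hji : j = i
      · subst hji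
        rw [if_pos rfl, Pi.single_eq_same]
        norm_num
      · rw [if_neg hji,
          Pi.single_eq_of_ne (fun hc : xa (z1 i) = xa (z1 j) => hji (hz1inj j i (by injection hc with h'; exact h'.symm)))]
        norm_num
  · -- part (iv) : n - 2
    have hle : n - 2 ≤ n - 1 := by omega
    refine le_trans hle ?_
    set u : Fin (n-1) → ZMod (2*n) := fun i => ((i.val + 1 : ℕ) : ZMod (2*n)) with hud
    have hvu : ∀ i, (u i).val = i.val + 1 := fun i =>
      ZMod.val_cast_of_lt (by have := i.isLt; omega)
    have hu0 : ∀ i, u i ≠ 0 := by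
      intro i h
      have h2 := congrArg ZMod.val h
      rw [hvu, ZMod.val_zero] at h2
      omega
    have huN0 : ∀ i, u i ≠ N + 0 := by
      intro i h
      rw [add_zero] at h
      have h2 := congrArg ZMod.val h
      rw [hvu, hNval] at h2
      have := i.isLt
      omega
    have huinj : ∀ i j, u i = u j → i = j := by
      intro i j h
      have h2 := congrArg ZMod.val h
      rw [hvu, hvu] at h2
      exact Fin.ext (by omega)
    apply eig_lb _ _ (fun i => Pi.single (xa (u i)) 1 + Pi.single (xa (N + u i)) 1 +
      Pi.single (xa (0 : ZMod (2*n))) (-1) + Pi.single (xa (N + 0)) (-1))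
    · intro i
      exact quad_eigen α (u i) 0 (hu0 i) (huN0 i)
    · apply li_probe _ (fun i => xa (u i))
      intro i j
      have hvNu : ∀ k, (N + u k).val = n + k.val + 1 := by
        intro k
        have h3 : N + u k = ((n + (k.val + 1) : ℕ) : ZMod (2*n)) := by
          simp only [hud]; push_cast; ring
        rw [h3]
        have h4 := ZMod.val_cast_of_lt (show n + (k.val + 1) < 2*n by have := k.isLt; omega)
        rw [h4]
        omega
      rw [Pi.add_apply, Pi.add_apply, Pi.add_apply,
        Pi.single_eq_of_ne (fun hc : xa (u i) = xa (N + u j) => by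
          injection hc with h'
          have h2 := congrArg ZMod.val h'
          rw [hvu, hvNu] at h2
          have := i.isLt
          omega),
        Pi.single_eq_of_ne (fun hc : xa (u i) = xa (0:ZMod (2*n)) => hu0 i (by injection hc)),
        Pi.single_eq_of_ne (fun hc : xa (u i) = xa (N + 0) => huN0 i (by injection hc))]
      by_cases hji : j = i
      · subst hji
        rw [if_pos rfl, Pi.single_eq_same]
        norm_num
      · rw [if_neg hji,
          Pi.single_eq_of_ne (fun hc : xa (u i) = xa (u j) => hji (huinj j i (by injection hc with h'; exact h'.symm)))]
        norm_num
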